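/- arXiv:2510.12077 — 6 statements merged into one kernel-verified Lean document; each statement's English description precedes it below -/
import Mathlib

section
/- Let X be a finite set with at least two elements and let 0 < m ≤ 1/|X|. For all probability distributions q and p on X belonging to the restricted simplex Δ̊_m(X), the Kullback–Leibler divergence satisfies (1/2)·‖p − q‖₂² ≤ D(q‖p) ≤ (1/(2m))·‖p − q‖₂², where ‖p − q‖₂² = Σ_{x∈X} (p(x) − q(x))². In particular, there exist constants c, c' > 0 (depending only on m) such that c‖p − q‖₂² ≤ D(q‖p) ≤ c'‖p − q‖₂² for all such p, q. -/
open Finset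

/-- A probability distribution on a finite type: nonnegative and sums to 1. -/
def IsProb {X : Type*} [Fintype X] (p : X → ℝ) : Prop :=
  (∀ x, 0 ≤ p x) ∧ ∑ x, p x = 1

/-- Kullback–Leibler divergence between distributions on a finite type. -/
noncomputable def klDiv {X : Type*} [Fintype X] (q p : X → ℝ) : ℝ :=
  ∑ x, q x * Real.log (q x / p x)


lemma f1_deriv {x : ℝ} (hx0 : 0 < x) :
    HasDerivAt (fun x : ℝ => x - 1 - Real.log x - (x - 1)^2/2) (1 - x⁻¹ - (x - 1)) x := by
  have h := (((hasDerivAt_id x).sub_const 1).sub (Real.hasDerivAt_log hx0.ne')).sub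
      ((((hasDerivAt_id x).sub_const 1).pow 2).div_const 2)
  refine h.congr_deriv ?_
  simp

lemma f1_antitone : AntitoneOn (fun x : ℝ => x - 1 - Real.log x - (x - 1)^2/2) (Set.Ioi 0) := by
  apply antitoneOn_of_deriv_nonpos (convex_Ioi 0)
  · apply ContinuousOn.sub
    apply ContinuousOn.sub
    · fun_prop
    · exact Real.continuousOn_log.mono (by intro x hx; simp at hx ⊢; linarith)
    · fun_prop
  · intro x hx
    rw [interior_Ioi] at hx
    exact (f1_deriv hx).differentiableAt.differentiableWithinAt
  · intro x hx
    rw [interior_Ioi] at hx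
    have hx0 : (0:ℝ) < x := hx
    rw [(f1_deriv hx).deriv]
    have key : (1 - x⁻¹ - (x - 1)) * x = -((x-1)^2) := by field_simp; ring
    nlinarith [sq_nonneg (x-1)]

lemma f2_deriv {x : ℝ} (hx0 : 0 < x) :
    HasDerivAt (fun x : ℝ => x/2 - 1/(2*x) - Real.log x) (1/2 + 1/(2*x^2) - x⁻¹) x := by
  have h2x : (2:ℝ)*x ≠ 0 := mul_ne_zero two_ne_zero hx0.ne'
  have h1 : HasDerivAt (fun x : ℝ => 1/(2*x)) ((0*(2*x) - 1*(2*1))/(2*x)^2) x :=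
    (hasDerivAt_const x 1).div ((hasDerivAt_id x).const_mul 2) h2x
  have h := (((hasDerivAt_id x).div_const 2).sub h1).sub (Real.hasDerivAt_log hx0.ne')
  refine h.congr_deriv ?_
  field_simp
  ring

lemma f2_mono : MonotoneOn (fun x : ℝ => x/2 - 1/(2*x) - Real.log x) (Set.Ioi 0) := by
  apply monotoneOn_of_deriv_nonneg (convex_Ioi 0)
  · apply ContinuousOn.sub
    apply ContinuousOn.sub
    · fun_prop
    · apply ContinuousOn.div continuousOn_const (by fun_prop)
      intro x hx; simp at hx; positivity
    · exact Real.continuousOn_log.mono (by intro x hx; simp at hx ⊢; linarith)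
  · intro x hx
    rw [interior_Ioi] at hx
    exact (f2_deriv hx).differentiableAt.differentiableWithinAt
  · intro x hx
    rw [interior_Ioi] at hx
    have hx0 : (0:ℝ) < x := hx
    rw [(f2_deriv hx).deriv]
    have key : (1/2 + 1/(2*x^2) - x⁻¹) * (2*x^2) = (x-1)^2 := by field_simp; ring
    have h2 : (0:ℝ) < 2*x^2 := by positivity
    nlinarith [key, h2]

lemma key1 {x : ℝ} (hx : 0 < x) (hx1 : x ≤ 1) : (x-1)^2/2 ≤ x - 1 - Real.log x := by
  have h := f1_antitone (Set.mem_Ioi.2 hx) (Set.mem_Ioi.2 one_pos) hx1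
  simp only [Real.log_one] at h
  norm_num at h
  linarith

lemma key4 {x : ℝ} (hx : 1 ≤ x) : x - 1 - Real.log x ≤ (x-1)^2/2 := by
  have h := f1_antitone (Set.mem_Ioi.2 one_pos) (Set.mem_Ioi.2 (lt_of_lt_of_le one_pos hx)) hx
  simp only [Real.log_one] at h
  norm_num at h
  linarith

lemma f2_eq {x : ℝ} (hx : 0 < x) :
    x - 1 - Real.log x - (x-1)^2/(2*x) = x/2 - 1/(2*x) - Real.log x := by
  field_simp; ring

lemma key2 {x : ℝ} (hx : 1 ≤ x) : (x-1)^2/(2*x) ≤ x - 1 - Real.log x := by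
  have hx0 : (0:ℝ) < x := lt_of_lt_of_le one_pos hx
  have h := f2_mono (Set.mem_Ioi.2 one_pos) (Set.mem_Ioi.2 hx0) hx
  have h1 : (1:ℝ)/2 - 1/(2*1) - Real.log 1 = 0 := by simp
  have he := f2_eq hx0
  simp only at h
  linarith

lemma key3 {x : ℝ} (hx : 0 < x) (hx1 : x ≤ 1) : x - 1 - Real.log x ≤ (x-1)^2/(2*x) := by
  have h := f2_mono (Set.mem_Ioi.2 hx) (Set.mem_Ioi.2 one_pos) hx1
  have h1 : (1:ℝ)/2 - 1/(2*1) - Real.log 1 = 0 := by simp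
  have he := f2_eq hx
  simp only at h
  linarith

lemma pointwise {m a b : ℝ} (hm : 0 < m) (ha : m ≤ a) (hb : m ≤ b)
    (ha1 : a ≤ 1) (hb1 : b ≤ 1) :
    (a - b)^2/2 ≤ a * Real.log (a/b) - (a - b) ∧
    a * Real.log (a/b) - (a - b) ≤ (a - b)^2/(2*m) := by
  have ha0 : 0 < a := lt_of_lt_of_le hm ha
  have hb0 : 0 < b := lt_of_lt_of_le hm hb
  set x := b/a with hxdef
  have hx0 : 0 < x := div_pos hb0 ha0
  have hlog : Real.log (a/b) = -(Real.log x) := by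
    rw [hxdef, Real.log_div hb0.ne' ha0.ne', Real.log_div ha0.ne' hb0.ne']
    ring
  have hbx : b = a * x := by rw [hxdef]; field_simp
  have key : a * Real.log (a/b) - (a - b) = a * (x - 1 - Real.log x) := by
    rw [hlog, hbx]; ring
  have hab2 : (a - b)^2 = a^2 * (x - 1)^2 := by rw [hbx]; ring
  rw [key, hab2]
  rcases le_total x 1 with hx1 | hx1
  · -- b ≤ a
    have h1 := key1 hx0 hx1
    have h3 := key3 hx0 hx1
    constructor
    · -- a^2 (x-1)^2/2 ≤ a (x-1-log x); use a ≤ 1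
      have := mul_le_mul_of_nonneg_left h1 ha0.le
      nlinarith [sq_nonneg (x-1), mul_nonneg (mul_nonneg ha0.le ha0.le) (sq_nonneg (x-1))]
    · -- a (x-1-log x) ≤ a (x-1)^2/(2x) = a^2(x-1)^2/(2b) ≤ .../(2m)
      have h4 : a * (x - 1 - Real.log x) ≤ a * ((x-1)^2/(2*x)) :=
        mul_le_mul_of_nonneg_left h3 ha0.le
      have h5 : a * ((x-1)^2/(2*x)) = a^2*(x-1)^2/(2*b) := by
        rw [hbx]; field_simp
      have h6 : a^2*(x-1)^2/(2*b) ≤ a^2*(x-1)^2/(2*m) := by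
        apply div_le_div_of_nonneg_left _ (by positivity) (by linarith)
        positivity
      linarith
  · -- a ≤ b
    have h2 := key2 hx1
    have h4 := key4 hx1
    constructor
    · have h5 : a * ((x-1)^2/(2*x)) ≤ a * (x - 1 - Real.log x) :=
        mul_le_mul_of_nonneg_left h2 ha0.le
      have h6 : a * ((x-1)^2/(2*x)) = a^2*(x-1)^2/(2*b) := by
        rw [hbx]; field_simp
      have h7 : a^2*(x-1)^2/(2*b) ≥ a^2*(x-1)^2/2 := by
        apply div_le_div_of_nonneg_left _ (by positivity) (by linarith)
        positivity
      linarith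
    · have h5 : a * (x - 1 - Real.log x) ≤ a * ((x-1)^2/2) :=
        mul_le_mul_of_nonneg_left h4 ha0.le
      have h6 : a * ((x-1)^2/2) ≤ a^2*(x-1)^2/(2*m) := by
        rw [mul_div_assoc', div_le_div_iff₀ (by norm_num) (by positivity)]
        nlinarith [mul_le_mul_of_nonneg_left ha (mul_nonneg ha0.le (sq_nonneg (x-1)))]
      linarith

/-- for distributions in the restricted simplex `Δ̊_m(X)`,
`(1/2)‖p − q‖₂² ≤ D(q‖p) ≤ (1/(2m))‖p − q‖₂²`, and in particular there are
constants `c, c' > 0` with `c‖p − q‖₂² ≤ D(q‖p) ≤ c'‖p − q‖₂²`. -/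
theorem stmt0 {X : Type*} [Fintype X] (hX : 2 ≤ Fintype.card X)
    (m : ℝ) (hm : 0 < m) (hm' : m ≤ 1 / (Fintype.card X : ℝ)) :
    (∀ q p : X → ℝ, IsProb q → IsProb p → (∀ x, m ≤ q x) → (∀ x, m ≤ p x) →
      (1 / 2) * (∑ x, (p x - q x) ^ 2) ≤ klDiv q p ∧
      klDiv q p ≤ (1 / (2 * m)) * (∑ x, (p x - q x) ^ 2)) ∧
    (∃ c c' : ℝ, 0 < c ∧ 0 < c' ∧
      ∀ q p : X → ℝ, IsProb q → IsProb p → (∀ x, m ≤ q x) → (∀ x, m ≤ p x) →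
        c * (∑ x, (p x - q x) ^ 2) ≤ klDiv q p ∧
        klDiv q p ≤ c' * (∑ x, (p x - q x) ^ 2)) := by
  have main : ∀ q p : X → ℝ, IsProb q → IsProb p → (∀ x, m ≤ q x) → (∀ x, m ≤ p x) →
      (1 / 2) * (∑ x, (p x - q x) ^ 2) ≤ klDiv q p ∧
      klDiv q p ≤ (1 / (2 * m)) * (∑ x, (p x - q x) ^ 2) := by
    intro q p hq hp hqm hpm
    have hq1 : ∀ x, q x ≤ 1 := by
      intro x
      have h := Finset.single_le_sum (f := q) (fun i _ => hq.1 i) (mem_univ x)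
      rw [hq.2] at h; exact h
    have hp1 : ∀ x, p x ≤ 1 := by
      intro x
      have h := Finset.single_le_sum (f := p) (fun i _ => hp.1 i) (mem_univ x)
      rw [hp.2] at h; exact h
    have hkl : klDiv q p = ∑ x, (q x * Real.log (q x / p x) - (q x - p x)) := by
      rw [klDiv, Finset.sum_sub_distrib, Finset.sum_sub_distrib, hq.2, hp.2]
      ring
    constructor
    · rw [hkl, Finset.mul_sum]
      apply Finset.sum_le_sum
      intro x _
      have h := (pointwise hm (hqm x) (hpm x) (hq1 x) (hp1 x)).1
      have hsq : (p x - q x)^2 = (q x - p x)^2 := by ring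
      rw [hsq]
      linarith
    · rw [hkl, Finset.mul_sum]
      apply Finset.sum_le_sum
      intro x _
      have h := (pointwise hm (hqm x) (hpm x) (hq1 x) (hp1 x)).2
      have hsq : (p x - q x)^2 = (q x - p x)^2 := by ring
      rw [hsq]
      have h2m : (0:ℝ) < 2*m := by positivity
      rw [one_div, ← div_eq_inv_mul]
      linarith
  exact ⟨main, 1/2, 1/(2*m), by norm_num, by positivity, main⟩
end

section
/- Let X be a finite set and let q, p be probability distributions on X with q(x) > 0 and p(x) > 0 for all x ∈ X. Then (1/2)·Σ_{x∈X} (q(x) − p(x))²/max(q(x), p(x)) ≤ D(q‖p) ≤ (1/2)·Σ_{x∈X} (q(x) − p(x))²/min(q(x), p(x)). -/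
open Finset

private lemma antiF : AntitoneOn (fun x : ℝ => Real.log x - (x - x⁻¹) / 2) (Set.Ioi 0) := by
  have hder : ∀ x ∈ Set.Ioi (0:ℝ),
      HasDerivAt (fun x : ℝ => Real.log x - (x - x⁻¹) / 2) (-(x⁻¹ - 1) ^ 2 / 2) x := by
    intro x hx
    have hx0 : x ≠ 0 := ne_of_gt hx
    have h := (Real.hasDerivAt_log hx0).sub
      (((hasDerivAt_id x).sub (hasDerivAt_inv hx0)).div_const 2)
    refine h.congr_deriv ?_
    field_simp
    ring
  apply antitoneOn_of_deriv_nonpos (convex_Ioi 0)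
  · exact fun x hx => ((hder x hx).continuousAt.continuousWithinAt)
  · intro x hx
    rw [interior_Ioi] at hx
    exact ((hder x hx).differentiableAt.differentiableWithinAt)
  · intro x hx
    rw [interior_Ioi] at hx
    rw [(hder x hx).deriv]
    have : (0:ℝ) ≤ (x⁻¹ - 1) ^ 2 := sq_nonneg _
    linarith

private lemma monoG : MonotoneOn (fun x : ℝ => Real.log x - (3/2 - 2 * x⁻¹ + x⁻¹ ^ 2 / 2)) (Set.Ioi 0) := by
  have hder : ∀ x ∈ Set.Ioi (0:ℝ),
      HasDerivAt (fun x : ℝ => Real.log x - (3/2 - 2 * x⁻¹ + x⁻¹ ^ 2 / 2))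
        (x⁻¹ * (1 - x⁻¹) ^ 2) x := by
    intro x hx
    have hx0 : x ≠ 0 := ne_of_gt hx
    have h := (Real.hasDerivAt_log hx0).sub
      (((hasDerivAt_const x (3/2:ℝ)).sub ((hasDerivAt_inv hx0).const_mul 2)).add
        (((hasDerivAt_inv hx0).pow 2).div_const 2))
    refine h.congr_deriv ?_
    field_simp
    simp only [Nat.cast_ofNat, Nat.add_one_sub_one, pow_one]
    field_simp
    ring
  apply monotoneOn_of_deriv_nonneg (convex_Ioi 0)
  · exact fun x hx => ((hder x hx).continuousAt.continuousWithinAt)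
  · intro x hx
    rw [interior_Ioi] at hx
    exact ((hder x hx).differentiableAt.differentiableWithinAt)
  · intro x hx
    rw [interior_Ioi] at hx
    rw [(hder x hx).deriv]
    exact mul_nonneg (inv_nonneg.2 (le_of_lt hx)) (sq_nonneg _)

private lemma key (a b : ℝ) (ha : 0 < a) (hb : 0 < b) :
    (a - b) ^ 2 / max a b / 2 ≤ a * Real.log (a / b) - a + b ∧
    a * Real.log (a / b) - a + b ≤ (a - b) ^ 2 / min a b / 2 := by
  set x := a / b with hxdef
  have hx : 0 < x := div_pos ha hb
  have hx1 : (1:ℝ) ∈ Set.Ioi (0:ℝ) := by norm_num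
  have hxm : x ∈ Set.Ioi (0:ℝ) := hx
  have hxinv : x⁻¹ = b / a := by rw [hxdef]; field_simp
  rcases le_total b a with hba | hab
  · -- a ≥ b : x ≥ 1
    have hx1le : (1:ℝ) ≤ x := (one_le_div hb).2 hba
    have hmax : max a b = a := max_eq_left hba
    have hmin : min a b = b := min_eq_right hba
    -- F antitone: log x ≤ (x - 1/x)/2
    have hlogle : Real.log x ≤ (x - x⁻¹) / 2 := by
      have hFle := antiF hx1 hxm hx1le
      simp only [Real.log_one, inv_one] at hFle
      linarith
    have hlogge : 3/2 - 2 * x⁻¹ + x⁻¹ ^ 2 / 2 ≤ Real.log x := by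
      have hGle := monoG hx1 hxm hx1le
      simp only [Real.log_one, inv_one] at hGle
      linarith
    constructor
    · rw [hmax]
      have h2 : a * (3/2 - 2 * x⁻¹ + x⁻¹ ^ 2 / 2) ≤ a * Real.log x :=
        mul_le_mul_of_nonneg_left hlogge ha.le
      rw [hxinv] at h2
      have : a * (3/2 - 2 * (b/a) + (b/a) ^ 2 / 2) = (a - b)^2 / a / 2 + a - b := by
        field_simp; ring
      linarith [this ▸ h2]
    · rw [hmin]
      have h2 : a * Real.log x ≤ a * ((x - x⁻¹) / 2) :=
        mul_le_mul_of_nonneg_left hlogle ha.le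
      rw [hxinv, hxdef] at h2
      have : a * ((a/b - b/a) / 2) = (a - b)^2 / b / 2 + a - b := by
        field_simp; ring
      linarith [this ▸ h2]
  · -- a ≤ b : x ≤ 1
    have hxle1 : x ≤ 1 := (div_le_one hb).2 hab
    have hmax : max a b = b := max_eq_right hab
    have hmin : min a b = a := min_eq_left hab
    have hlogge : (x - x⁻¹) / 2 ≤ Real.log x := by
      have hFle := antiF hxm hx1 hxle1
      simp only [Real.log_one, inv_one] at hFle
      linarith
    have hlogle : Real.log x ≤ 3/2 - 2 * x⁻¹ + x⁻¹ ^ 2 / 2 := by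
      have hGle := monoG hxm hx1 hxle1
      simp only [Real.log_one, inv_one] at hGle
      linarith
    constructor
    · rw [hmax]
      have h2 : a * ((x - x⁻¹) / 2) ≤ a * Real.log x :=
        mul_le_mul_of_nonneg_left hlogge ha.le
      rw [hxinv, hxdef] at h2
      have : a * ((a/b - b/a) / 2) = (a - b)^2 / b / 2 + a - b := by
        field_simp; ring
      linarith [this ▸ h2]
    · rw [hmin]
      have h2 : a * Real.log x ≤ a * (3/2 - 2 * x⁻¹ + x⁻¹ ^ 2 / 2) :=
        mul_le_mul_of_nonneg_left hlogle ha.le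
      rw [hxinv] at h2
      have : a * (3/2 - 2 * (b/a) + (b/a) ^ 2 / 2) = (a - b)^2 / a / 2 + a - b := by
        field_simp; ring
      linarith [this ▸ h2]

/-- chi-square-like bounds for the KL divergence:
`(1/2)·Σ (q−p)²/max(q,p) ≤ D(q‖p) ≤ (1/2)·Σ (q−p)²/min(q,p)`. -/
theorem stmt1 {X : Type*} [Fintype X] (q p : X → ℝ)
    (hq : IsProb q) (hp : IsProb p)
    (hqpos : ∀ x, 0 < q x) (hppos : ∀ x, 0 < p x) :
    (1 / 2) * (∑ x, (q x - p x) ^ 2 / max (q x) (p x)) ≤ klDiv q p ∧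
    klDiv q p ≤ (1 / 2) * (∑ x, (q x - p x) ^ 2 / min (q x) (p x)) := by
  have hkl : klDiv q p = ∑ x, (q x * Real.log (q x / p x) - q x + p x) := by
    rw [klDiv]
    rw [Finset.sum_add_distrib, Finset.sum_sub_distrib, hq.2, hp.2]
    ring
  constructor
  · rw [hkl, Finset.mul_sum]
    apply Finset.sum_le_sum
    intro x _
    have h := (key (q x) (p x) (hqpos x) (hppos x)).1
    calc 1/2 * ((q x - p x) ^ 2 / max (q x) (p x))
        = (q x - p x) ^ 2 / max (q x) (p x) / 2 := by ring
      _ ≤ _ := h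
  · rw [hkl, Finset.mul_sum]
    apply Finset.sum_le_sum
    intro x _
    have h := (key (q x) (p x) (hqpos x) (hppos x)).2
    calc q x * Real.log (q x / p x) - q x + p x
        ≤ (q x - p x) ^ 2 / min (q x) (p x) / 2 := h
      _ = 1/2 * ((q x - p x) ^ 2 / min (q x) (p x)) := by ring
end

section
/- Let X be a finite set and let q, p be probability distributions on X with q(x) > 0 and p(x) > 0 for all x ∈ X. Let ℓ(x) = log(q(x)/p(x)), M = max_{x∈X} ℓ(x) and m̃ = min_{x∈X} ℓ(x). Then, with c = 2/max(1, e^{−m̃}) and c' = 2/min(1, e^{−M}), one has c·D(q‖p) ≤ Σ_{x∈X} q(x)·ℓ(x)² ≤ c'·D(q‖p). -/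
open Finset

lemma aux_nonneg (f f' : ℝ → ℝ) (hd : ∀ x, HasDerivAt f (f' x) x) (h0 : f 0 = 0)
    (hf' : ∀ x, 0 ≤ x → 0 ≤ f' x) : ∀ s, 0 ≤ s → 0 ≤ f s := by
  have hm : MonotoneOn f (Set.Ici (0:ℝ)) := by
    apply monotoneOn_of_deriv_nonneg (convex_Ici 0)
    · exact fun x _ => (hd x).differentiableAt.continuousAt.continuousWithinAt
    · exact fun x _ => (hd x).differentiableAt.differentiableWithinAt
    · intro x hx
      rw [interior_Ici] at hx
      rw [(hd x).deriv]
      exact hf' x hx.le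
  intro s hs
  calc (0:ℝ) = f 0 := h0.symm
  _ ≤ f s := hm (Set.self_mem_Ici) hs hs

lemma ineq_Alow {s : ℝ} (hs : 0 ≤ s) : s^2/2 ≤ Real.exp s - 1 - s := by
  have h := aux_nonneg (fun s => Real.exp s - 1 - s - s^2/2) (fun s => Real.exp s - 1 - s)
    (fun x => by
      have h1 := Real.hasDerivAt_exp x
      have h2 : HasDerivAt (fun s : ℝ => s^2/2) x x := by
        have := (hasDerivAt_pow 2 x).div_const 2
        refine this.congr_deriv ?_; push_cast; ring
      have := ((h1.sub_const 1).sub (hasDerivAt_id x)).sub h2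
      exact this)
    (by norm_num)
    (fun x hx => by show 0 ≤ Real.exp x - 1 - x; nlinarith [Real.add_one_le_exp x])
    s hs
  linarith

lemma ineq_Aup {s : ℝ} (hs : 0 ≤ s) : Real.exp s - 1 - s ≤ s^2/2 * Real.exp s := by
  -- f s = s^2/2 * exp s - exp s + 1 + s ;  f' s = (s + s^2/2) exp s - exp s + 1
  have hstep : ∀ x : ℝ, 0 ≤ x → 0 ≤ (x + x^2/2) * Real.exp x - Real.exp x + 1 := by
    have h := aux_nonneg (fun s => (s + s^2/2) * Real.exp s - Real.exp s + 1)
      (fun s => (2*s + s^2/2) * Real.exp s)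
      (fun x => by
        have h1 : HasDerivAt (fun s : ℝ => s + s^2/2) (1 + x) x := by
          have := (hasDerivAt_id x).add ((hasDerivAt_pow 2 x).div_const 2)
          refine this.congr_deriv ?_; push_cast; ring
        have := ((h1.mul (Real.hasDerivAt_exp x)).sub (Real.hasDerivAt_exp x)).add_const 1
        refine this.congr_deriv ?_; ring)
      (by norm_num)
      (fun x hx => by positivity)
    exact h
  have h := aux_nonneg (fun s => s^2/2 * Real.exp s - Real.exp s + 1 + s)
    (fun s => (s + s^2/2) * Real.exp s - Real.exp s + 1)
    (fun x => by
      have h1 : HasDerivAt (fun s : ℝ => s^2/2) x x := by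
        have := (hasDerivAt_pow 2 x).div_const 2
        refine this.congr_deriv ?_; push_cast; ring
      have := (((h1.mul (Real.hasDerivAt_exp x)).sub (Real.hasDerivAt_exp x)).add_const 1).add (hasDerivAt_id x)
      refine this.congr_deriv ?_; ring)
    (by norm_num)
    (fun x hx => hstep x hx)
    s hs
  linarith

lemma ineq_Blow {s : ℝ} (hs : 0 ≤ s) : s^2/2 ≤ 1 + (s - 1) * Real.exp s := by
  have h := aux_nonneg (fun s => 1 + (s - 1) * Real.exp s - s^2/2)
    (fun s => s * (Real.exp s - 1))
    (fun x => by
      have h1 : HasDerivAt (fun s : ℝ => s - 1) 1 x := (hasDerivAt_id x).sub_const 1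
      have h2 : HasDerivAt (fun s : ℝ => s^2/2) x x := by
        have := (hasDerivAt_pow 2 x).div_const 2
        refine this.congr_deriv ?_; push_cast; ring
      have := ((h1.mul (Real.hasDerivAt_exp x)).const_add 1).sub h2
      refine this.congr_deriv ?_; ring)
    (by norm_num)
    (fun x hx => mul_nonneg hx (by nlinarith [Real.add_one_le_exp x]))
    s hs
  linarith

lemma ineq_Bup {s : ℝ} (hs : 0 ≤ s) : Real.exp (-s) ≤ 1 - s + s^2/2 := by
  have h := aux_nonneg (fun s => 1 - s + s^2/2 - Real.exp (-s))
    (fun s => -1 + s + Real.exp (-s))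
    (fun x => by
      have h1 : HasDerivAt (fun s : ℝ => Real.exp (-s)) (-Real.exp (-x)) x := by
        have := (Real.hasDerivAt_exp (-x)).comp x ((hasDerivAt_id x).neg)
        refine this.congr_deriv ?_; ring
      have h2 : HasDerivAt (fun s : ℝ => s^2/2) x x := by
        have := (hasDerivAt_pow 2 x).div_const 2
        refine this.congr_deriv ?_; push_cast; ring
      have := ((hasDerivAt_const x (1:ℝ)).sub (hasDerivAt_id x)).add h2 |>.sub h1
      refine this.congr_deriv ?_; ring)
    (by norm_num)
    (fun x hx => by show 0 ≤ -1 + x + Real.exp (-x); nlinarith [Real.add_one_le_exp (-x)])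
    s hs
  linarith

lemma g_up (t : ℝ) : t + Real.exp (-t) - 1 ≤ t^2/2 * max 1 (Real.exp (-t)) := by
  rcases le_total 0 t with ht | ht
  · rw [max_eq_left (Real.exp_le_one_iff.2 (neg_nonpos.2 ht))]
    have := ineq_Bup ht
    nlinarith
  · rw [max_eq_right (Real.one_le_exp (by linarith))]
    have := ineq_Aup (s := -t) (by linarith)
    have h2 : t^2/2 * Real.exp (-t) = (-t)^2/2 * Real.exp (-t) := by ring
    rw [h2]
    linarith

lemma g_low (t : ℝ) : t^2/2 * min 1 (Real.exp (-t)) ≤ t + Real.exp (-t) - 1 := by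
  rcases le_total 0 t with ht | ht
  · rw [min_eq_right (Real.exp_le_one_iff.2 (neg_nonpos.2 ht))]
    have hB := ineq_Blow ht
    have he : Real.exp t * Real.exp (-t) = 1 := by
      rw [← Real.exp_add]; simp
    have key := mul_le_mul_of_nonneg_right hB (Real.exp_pos (-t)).le
    have hr : (1 + (t-1) * Real.exp t) * Real.exp (-t) = Real.exp (-t) + t - 1 := by
      linear_combination (t-1) * he
    rw [hr] at key
    linarith
  · rw [min_eq_left (Real.one_le_exp (by linarith))]
    have := ineq_Alow (s := -t) (by linarith)
    have h2 : t^2/2 = (-t)^2/2 := by ring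
    rw [h2, mul_one]
    linarith

lemma pt_low (t m : ℝ) (h : m ≤ t) (c : ℝ) (hc : 0 ≤ c) :
    2 / max 1 (Real.exp (-m)) * (c * (t + Real.exp (-t) - 1)) ≤ c * t^2 := by
  have hcmax : 0 < max 1 (Real.exp (-m)) := lt_of_lt_of_le one_pos (le_max_left _ _)
  have h1 := g_up t
  have h2 : max 1 (Real.exp (-t)) ≤ max 1 (Real.exp (-m)) :=
    max_le_max le_rfl (Real.exp_le_exp.2 (by linarith))
  have h3 : t + Real.exp (-t) - 1 ≤ t^2/2 * max 1 (Real.exp (-m)) :=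
    h1.trans (mul_le_mul_of_nonneg_left h2 (by positivity))
  have h4 : 2 / max 1 (Real.exp (-m)) * (t + Real.exp (-t) - 1) ≤ t^2 := by
    rw [div_mul_eq_mul_div, div_le_iff₀ hcmax]; linarith
  calc 2 / max 1 (Real.exp (-m)) * (c * (t + Real.exp (-t) - 1))
      = c * (2 / max 1 (Real.exp (-m)) * (t + Real.exp (-t) - 1)) := by ring
    _ ≤ c * t^2 := mul_le_mul_of_nonneg_left h4 hc

lemma pt_up (t M : ℝ) (h : t ≤ M) (c : ℝ) (hc : 0 ≤ c) :
    c * t^2 ≤ 2 / min 1 (Real.exp (-M)) * (c * (t + Real.exp (-t) - 1)) := by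
  have hcmin : 0 < min 1 (Real.exp (-M)) := lt_min one_pos (Real.exp_pos _)
  have h1 := g_low t
  have h2 : min 1 (Real.exp (-M)) ≤ min 1 (Real.exp (-t)) :=
    min_le_min le_rfl (Real.exp_le_exp.2 (by linarith))
  have h3 : t^2/2 * min 1 (Real.exp (-M)) ≤ t + Real.exp (-t) - 1 :=
    le_trans (mul_le_mul_of_nonneg_left h2 (by positivity)) h1
  have h4 : t^2 ≤ 2 / min 1 (Real.exp (-M)) * (t + Real.exp (-t) - 1) := by
    rw [div_mul_eq_mul_div, le_div_iff₀ hcmin]; linarith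
  calc c * t^2 ≤ c * (2 / min 1 (Real.exp (-M)) * (t + Real.exp (-t) - 1)) :=
        mul_le_mul_of_nonneg_left h4 hc
    _ = 2 / min 1 (Real.exp (-M)) * (c * (t + Real.exp (-t) - 1)) := by ring

/-- with `ℓ(x) = log(q(x)/p(x))`, `M = max_x ℓ(x)`, `m̃ = min_x ℓ(x)`,
`c = 2/max(1, e^{−m̃})` and `c' = 2/min(1, e^{−M})`, one has
`c·D(q‖p) ≤ Σ_x q(x)·ℓ(x)² ≤ c'·D(q‖p)`. -/
theorem stmt7 {X : Type*} [Fintype X] [Nonempty X] (q p : X → ℝ)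
    (hq : IsProb q) (hp : IsProb p)
    (hqpos : ∀ x, 0 < q x) (hppos : ∀ x, 0 < p x) :
    (2 / max 1 (Real.exp (-(Finset.univ.inf' Finset.univ_nonempty
          (fun x => Real.log (q x / p x)))))) * klDiv q p
      ≤ ∑ x, q x * (Real.log (q x / p x)) ^ 2 ∧
    ∑ x, q x * (Real.log (q x / p x)) ^ 2
      ≤ (2 / min 1 (Real.exp (-(Finset.univ.sup' Finset.univ_nonempty
          (fun x => Real.log (q x / p x)))))) * klDiv q p := by
  obtain ⟨hq0, hq1⟩ := hq
  obtain ⟨hp0, hp1⟩ := hp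
  have hexp : ∀ x, Real.exp (-(Real.log (q x / p x))) = p x / q x := by
    intro x
    rw [Real.exp_neg, Real.exp_log (div_pos (hqpos x) (hppos x)), inv_div]
  have hkey : klDiv q p = ∑ x, q x * (Real.log (q x / p x)
      + Real.exp (-(Real.log (q x / p x))) - 1) := by
    rw [klDiv]
    have hc : ∀ x ∈ Finset.univ, q x * (Real.log (q x / p x)
        + Real.exp (-(Real.log (q x / p x))) - 1)
        = q x * Real.log (q x / p x) + (p x - q x) := by
      intro x _
      rw [hexp x]
      have hne := (hqpos x).ne'
      field_simp
      ring
    rw [Finset.sum_congr rfl hc, Finset.sum_add_distrib, Finset.sum_sub_distrib, hp1, hq1]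
    ring
  constructor
  · rw [hkey, Finset.mul_sum]
    apply Finset.sum_le_sum
    intro x _
    have hb : Finset.univ.inf' Finset.univ_nonempty (fun y => Real.log (q y / p y))
        ≤ Real.log (q x / p x) := Finset.inf'_le _ (Finset.mem_univ x)
    exact pt_low _ _ hb _ (hq0 x)
  · rw [hkey, Finset.mul_sum]
    apply Finset.sum_le_sum
    intro x _
    have hb : Real.log (q x / p x)
        ≤ Finset.univ.sup' Finset.univ_nonempty (fun y => Real.log (q y / p y)) :=
      by exact Finset.le_sup' (fun y => Real.log (q y / p y)) (Finset.mem_univ x)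
    exact pt_up _ _ hb _ (hq0 x)
end

section
/- Let X be a finite set and let q, p be probability distributions on X with q(x) > 0 and p(x) > 0 for all x ∈ X. Let ℓ(x) = log(q(x)/p(x)), M = max_{x∈X} ℓ(x) and m̃ = min_{x∈X} ℓ(x). Then, with c = 2/max(1, e^{−m̃}) and c' = 2/min(1, e^{−M}), the variance Var_q(ℓ) := Σ_{x∈X} q(x)·ℓ(x)² − D(q‖p)² satisfies (c − D(q‖p))·D(q‖p) ≤ Var_q(ℓ) ≤ (c' − D(q‖p))·D(q‖p). -/
open Finset

lemma stmt8_h_nonneg (t : ℝ) : 0 ≤ Real.exp t * t - Real.exp t + 1 := by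
  have h := Real.add_one_le_exp (-t)
  have h2 : Real.exp t * (-t + 1) ≤ Real.exp t * Real.exp (-t) :=
    mul_le_mul_of_nonneg_left h (Real.exp_pos t).le
  rw [← Real.exp_add, add_neg_cancel, Real.exp_zero] at h2
  nlinarith

lemma stmt8_hd_et (s : ℝ) :
    HasDerivAt (fun x : ℝ => Real.exp x * x) (Real.exp s * s + Real.exp s) s := by
  have := (Real.hasDerivAt_exp s).fun_mul (hasDerivAt_id s)
  simpa using this

lemma stmt8_hd_ets (s : ℝ) : HasDerivAt (fun x : ℝ => Real.exp x * x ^ 2)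
    (Real.exp s * s ^ 2 + Real.exp s * (2 * s)) s := by
  have := (Real.hasDerivAt_exp s).fun_mul (hasDerivAt_pow 2 s)
  simpa [mul_comm] using this

lemma stmt8_hd_h (s : ℝ) : HasDerivAt (fun x : ℝ => Real.exp x * x - Real.exp x + 1)
    (Real.exp s * s) s := by
  have := ((stmt8_hd_et s).sub (Real.hasDerivAt_exp s)).add_const 1
  simpa using this

lemma stmt8_A1 {t : ℝ} (ht : 0 ≤ t) : t ^ 2 ≤ 2 * (Real.exp t * t - Real.exp t + 1) := by
  have hmono : Monotone (fun x : ℝ => 2 * (Real.exp x * x - Real.exp x + 1) - x ^ 2) := by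
    have hd : ∀ s : ℝ, HasDerivAt (fun x : ℝ => 2 * (Real.exp x * x - Real.exp x + 1) - x ^ 2)
        (2 * (Real.exp s * s) - 2 * s) s := by
      intro s
      have := ((stmt8_hd_h s).const_mul 2).fun_sub (hasDerivAt_pow 2 s)
      simpa [mul_comm] using this
    apply monotone_of_deriv_nonneg (fun s => (hd s).differentiableAt)
    intro s
    rw [(hd s).deriv]
    rcases le_total 0 s with hs | hs
    · nlinarith [Real.one_le_exp hs]
    · nlinarith [Real.exp_le_one_iff.mpr hs]
  have := hmono ht
  simpa using this

lemma stmt8_A2 {t : ℝ} (ht : t ≤ 0) :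
    Real.exp t * t ^ 2 ≤ 2 * (Real.exp t * t - Real.exp t + 1) := by
  have hanti : Antitone
      (fun x : ℝ => 2 * (Real.exp x * x - Real.exp x + 1) - Real.exp x * x ^ 2) := by
    have hd : ∀ s : ℝ, HasDerivAt
        (fun x : ℝ => 2 * (Real.exp x * x - Real.exp x + 1) - Real.exp x * x ^ 2)
        (2 * (Real.exp s * s) - (Real.exp s * s ^ 2 + Real.exp s * (2 * s))) s := by
      intro s
      exact ((stmt8_hd_h s).const_mul 2).sub (stmt8_hd_ets s)
    apply antitone_of_deriv_nonpos (fun s => (hd s).differentiableAt)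
    intro s
    rw [(hd s).deriv]
    nlinarith [Real.exp_pos s, sq_nonneg s]
  have := hanti ht
  simpa using this

lemma stmt8_B1 {t : ℝ} (ht : 0 ≤ t) :
    2 * (Real.exp t * t - Real.exp t + 1) ≤ Real.exp t * t ^ 2 := by
  have hmono : Monotone
      (fun x : ℝ => Real.exp x * x ^ 2 - 2 * (Real.exp x * x - Real.exp x + 1)) := by
    have hd : ∀ s : ℝ, HasDerivAt
        (fun x : ℝ => Real.exp x * x ^ 2 - 2 * (Real.exp x * x - Real.exp x + 1))
        (Real.exp s * s ^ 2 + Real.exp s * (2 * s) - 2 * (Real.exp s * s)) s := by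
      intro s
      exact (stmt8_hd_ets s).sub ((stmt8_hd_h s).const_mul 2)
    apply monotone_of_deriv_nonneg (fun s => (hd s).differentiableAt)
    intro s
    rw [(hd s).deriv]
    nlinarith [Real.exp_pos s, sq_nonneg s]
  have := hmono ht
  simp at this
  linarith

lemma stmt8_B2 {t : ℝ} (ht : t ≤ 0) : 2 * (Real.exp t * t - Real.exp t + 1) ≤ t ^ 2 := by
  have hanti : Antitone (fun x : ℝ => x ^ 2 - 2 * (Real.exp x * x - Real.exp x + 1)) := by
    have hd : ∀ s : ℝ, HasDerivAt (fun x : ℝ => x ^ 2 - 2 * (Real.exp x * x - Real.exp x + 1))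
        (2 * s - 2 * (Real.exp s * s)) s := by
      intro s
      have := (hasDerivAt_pow 2 s).fun_sub ((stmt8_hd_h s).const_mul 2)
      simpa [mul_comm] using this
    apply antitone_of_deriv_nonpos (fun s => (hd s).differentiableAt)
    intro s
    rw [(hd s).deriv]
    rcases le_total 0 s with hs | hs
    · nlinarith [Real.one_le_exp hs]
    · nlinarith [Real.exp_le_one_iff.mpr hs]
  have := hanti ht
  simp at this
  linarith

lemma stmt8_LA (t : ℝ) :
    Real.exp t * t ^ 2 ≤ 2 * max 1 (Real.exp t) * (Real.exp t * t - Real.exp t + 1) := by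
  rcases le_total 0 t with ht | ht
  · rw [max_eq_right (Real.one_le_exp ht)]
    have := mul_le_mul_of_nonneg_left (stmt8_A1 ht) (Real.exp_pos t).le
    nlinarith
  · rw [max_eq_left (Real.exp_le_one_iff.mpr ht)]
    have := stmt8_A2 ht
    linarith

lemma stmt8_LB (t : ℝ) :
    2 * min 1 (Real.exp t) * (Real.exp t * t - Real.exp t + 1) ≤ Real.exp t * t ^ 2 := by
  rcases le_total 0 t with ht | ht
  · rw [min_eq_left (Real.one_le_exp ht)]
    have := stmt8_B1 ht
    linarith
  · rw [min_eq_right (Real.exp_le_one_iff.mpr ht)]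
    have := mul_le_mul_of_nonneg_left (stmt8_B2 ht) (Real.exp_pos t).le
    nlinarith

lemma stmt8_cP (M : ℝ) : 2 / min 1 (Real.exp (-M)) = 2 * max 1 (Real.exp M) := by
  rcases le_total 0 M with h | h
  · rw [min_eq_right (Real.exp_le_one_iff.mpr (by linarith)), max_eq_right (Real.one_le_exp h),
      Real.exp_neg]
    field_simp
  · rw [min_eq_left (Real.one_le_exp (by linarith)), max_eq_left (Real.exp_le_one_iff.mpr h)]
    norm_num

lemma stmt8_cM (m : ℝ) : 2 / max 1 (Real.exp (-m)) = 2 * min 1 (Real.exp m) := by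
  rcases le_total 0 m with h | h
  · rw [max_eq_left (Real.exp_le_one_iff.mpr (by linarith)), min_eq_left (Real.one_le_exp h)]
    norm_num
  · rw [max_eq_right (Real.one_le_exp (by linarith)), min_eq_right (Real.exp_le_one_iff.mpr h),
      Real.exp_neg]
    field_simp

/-- with `ℓ(x) = log(q(x)/p(x))`, `M = max_x ℓ(x)`, `m̃ = min_x ℓ(x)`,
`c = 2/max(1, e^{−m̃})` and `c' = 2/min(1, e^{−M})`, the variance
`Var_q(ℓ) = Σ_x q(x)·ℓ(x)² − D(q‖p)²` satisfies
`(c − D(q‖p))·D(q‖p) ≤ Var_q(ℓ) ≤ (c' − D(q‖p))·D(q‖p)`. -/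
theorem stmt8 {X : Type*} [Fintype X] [Nonempty X] (q p : X → ℝ)
    (hq : IsProb q) (hp : IsProb p)
    (hqpos : ∀ x, 0 < q x) (hppos : ∀ x, 0 < p x) :
    ((2 / max 1 (Real.exp (-(Finset.univ.inf' Finset.univ_nonempty
          (fun x => Real.log (q x / p x)))))) - klDiv q p) * klDiv q p
      ≤ (∑ x, q x * (Real.log (q x / p x)) ^ 2) - (klDiv q p) ^ 2 ∧
    (∑ x, q x * (Real.log (q x / p x)) ^ 2) - (klDiv q p) ^ 2
      ≤ ((2 / min 1 (Real.exp (-(Finset.univ.sup' Finset.univ_nonempty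
          (fun x => Real.log (q x / p x)))))) - klDiv q p) * klDiv q p := by
  set ℓ : X → ℝ := fun x => Real.log (q x / p x) with hℓ
  set M : ℝ := Finset.univ.sup' Finset.univ_nonempty ℓ with hM
  set m : ℝ := Finset.univ.inf' Finset.univ_nonempty ℓ with hm
  set D : ℝ := klDiv q p with hD
  have hpe : ∀ x, p x * Real.exp (ℓ x) = q x := by
    intro x
    rw [hℓ, Real.exp_log (div_pos (hqpos x) (hppos x)),
      mul_div_cancel₀ _ (hppos x).ne']
  have hsum : ∑ x, (q x * ℓ x - q x + p x) = D := by
    rw [Finset.sum_add_distrib, Finset.sum_sub_distrib, hq.2, hp.2, hD]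
    simp [klDiv, hℓ]
  -- upper bound
  have hup : ∑ x, q x * ℓ x ^ 2 ≤ 2 * max 1 (Real.exp M) * D := by
    calc ∑ x, q x * ℓ x ^ 2
        ≤ ∑ x, 2 * max 1 (Real.exp M) * (q x * ℓ x - q x + p x) := by
          apply Finset.sum_le_sum
          intro x _
          have step : Real.exp (ℓ x) * ℓ x ^ 2
              ≤ 2 * max 1 (Real.exp M) * (Real.exp (ℓ x) * ℓ x - Real.exp (ℓ x) + 1) := by
            refine le_trans (stmt8_LA (ℓ x)) ?_
            have hmax : max 1 (Real.exp (ℓ x)) ≤ max 1 (Real.exp M) :=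
              max_le_max le_rfl (Real.exp_le_exp.mpr (Finset.le_sup' ℓ (Finset.mem_univ x)))
            nlinarith [stmt8_h_nonneg (ℓ x)]
          calc q x * ℓ x ^ 2 = p x * (Real.exp (ℓ x) * ℓ x ^ 2) := by
                rw [← hpe x]; ring
            _ ≤ p x * (2 * max 1 (Real.exp M) * (Real.exp (ℓ x) * ℓ x - Real.exp (ℓ x) + 1)) :=
                mul_le_mul_of_nonneg_left step (hppos x).le
            _ = 2 * max 1 (Real.exp M) * (q x * ℓ x - q x + p x) := by
                rw [← hpe x]; ring
      _ = 2 * max 1 (Real.exp M) * D := by rw [← Finset.mul_sum, hsum]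
  -- lower bound
  have hlow : 2 * min 1 (Real.exp m) * D ≤ ∑ x, q x * ℓ x ^ 2 := by
    calc 2 * min 1 (Real.exp m) * D
        = ∑ x, 2 * min 1 (Real.exp m) * (q x * ℓ x - q x + p x) := by
          rw [← Finset.mul_sum, hsum]
      _ ≤ ∑ x, q x * ℓ x ^ 2 := by
          apply Finset.sum_le_sum
          intro x _
          have step : 2 * min 1 (Real.exp m) * (Real.exp (ℓ x) * ℓ x - Real.exp (ℓ x) + 1)
              ≤ Real.exp (ℓ x) * ℓ x ^ 2 := by
            refine le_trans ?_ (stmt8_LB (ℓ x))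
            have hmin : min 1 (Real.exp m) ≤ min 1 (Real.exp (ℓ x)) :=
              min_le_min le_rfl (Real.exp_le_exp.mpr (Finset.inf'_le ℓ (Finset.mem_univ x)))
            nlinarith [stmt8_h_nonneg (ℓ x)]
          calc 2 * min 1 (Real.exp m) * (q x * ℓ x - q x + p x)
              = p x * (2 * min 1 (Real.exp m) * (Real.exp (ℓ x) * ℓ x - Real.exp (ℓ x) + 1)) := by
                rw [← hpe x]; ring
            _ ≤ p x * (Real.exp (ℓ x) * ℓ x ^ 2) :=
                mul_le_mul_of_nonneg_left step (hppos x).le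
            _ = q x * ℓ x ^ 2 := by rw [← hpe x]; ring
  rw [stmt8_cP M, stmt8_cM m] at *
  constructor
  · nlinarith [hlow]
  · nlinarith [hup]
end

section
/- Let X be a finite set with at least two elements, let 0 < m ≤ 1/|X|, and let W be a set equipped with a map w ↦ p_w into the restricted simplex Δ̊_m(X). Then there exists a constant C > 0 (depending only on m) such that for every ε > 0 and every pair of distributions q, p* ∈ Δ̊_m(X) with D(q‖p*) ≤ ε, the following set inclusions hold: {w ∈ W : D(q‖p_w) ≤ ε} ⊆ {w ∈ W : D(p_w‖p*) ≤ C·ε} ⊆ {w ∈ W : D(q‖p_w) ≤ (C/2)·(C + 1)·ε}. -/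
open Finset

private lemma log_ub {y : ℝ} (hy : 1 ≤ y) : Real.log y ≤ (y - 1 / y) / 2 := by
  have h0 : 0 ≤ Real.log y := Real.log_nonneg hy
  have h1 : (0:ℝ) < y := by linarith
  have h := Real.self_le_sinh_iff.mpr h0
  rw [Real.sinh_eq, Real.exp_log h1, Real.exp_neg, Real.exp_log h1] at h
  rw [one_div]
  exact h

private lemma log_lb {y : ℝ} (hy : 1 ≤ y) : 2 * (y - 1) / (y + 1) ≤ Real.log y := by
  have hmono : MonotoneOn (fun z : ℝ => Real.log z - 2 * (z - 1) / (z + 1))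
      (Set.Ici 1) := by
    apply monotoneOn_of_deriv_nonneg (convex_Ici 1)
    · apply ContinuousOn.sub
      · exact fun z hz => (Real.continuousAt_log (by
          have : (1:ℝ) ≤ z := hz; positivity)).continuousWithinAt
      · apply ContinuousOn.div
        · fun_prop
        · fun_prop
        · intro z hz; have : (1:ℝ) ≤ z := hz; positivity
    · intro z hz
      rw [interior_Ici] at hz
      have hz1 : (1:ℝ) < z := hz
      exact ((Real.differentiableAt_log (by positivity)).sub
        (((differentiableAt_id.sub_const 1).const_mul 2).div
          ((differentiableAt_id).add_const 1) (by positivity))).differentiableWithinAt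
    · intro z hz
      rw [interior_Ici] at hz
      have hz1 : (1:ℝ) < z := hz
      have hz0 : z ≠ 0 := by positivity
      have hz1' : z + 1 ≠ 0 := by positivity
      have h1 : HasDerivAt (fun z : ℝ => Real.log z - 2 * (z - 1) / (z + 1))
          (z⁻¹ - (2 * 1 * (z + 1) - 2 * (z - 1) * 1) / (z + 1) ^ 2) z := by
        have hd := (((hasDerivAt_id z).sub_const 1).const_mul 2).div
          ((hasDerivAt_id z).add_const 1) hz1'
        exact (Real.hasDerivAt_log hz0).sub hd
      rw [h1.deriv]
      have e : z⁻¹ - (2 * 1 * (z + 1) - 2 * (z - 1) * 1) / (z + 1) ^ 2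
          = (z - 1) ^ 2 / (z * (z + 1) ^ 2) := by
        field_simp
        ring
      rw [e]
      positivity
  have := hmono (Set.mem_Ici.mpr le_rfl) (Set.mem_Ici.mpr hy) hy
  simp only [Real.log_one] at this
  have h2 : (0:ℝ) - 2 * (1 - 1) / (1 + 1) = 0 := by norm_num
  linarith [this]

private lemma pt_lower {a b : ℝ} (ha : 0 < a) (ha1 : a ≤ 1) (hb : 0 < b) (hb1 : b ≤ 1) :
    (a - b) ^ 2 / 2 ≤ a * Real.log (a / b) - a + b := by
  rcases le_total b a with h | h
  · have hy : 1 ≤ a / b := (one_le_div hb).mpr h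
    have hL := log_lb hy
    have e : 2 * (a / b - 1) / (a / b + 1) = 2 * (a - b) / (a + b) := by
      field_simp
      try ring
    rw [e] at hL
    have hab : (0:ℝ) < a + b := by linarith
    have h2 : a * (2 * (a - b) / (a + b)) - a + b = (a - b) ^ 2 / (a + b) := by
      field_simp
      ring
    have h3 : (a - b) ^ 2 / 2 ≤ (a - b) ^ 2 / (a + b) :=
      div_le_div_of_nonneg_left (sq_nonneg _) hab (by linarith)
    have h4 : a * (2 * (a - b) / (a + b)) ≤ a * Real.log (a / b) :=
      mul_le_mul_of_nonneg_left hL ha.le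
    linarith
  · have hy : 1 ≤ b / a := (one_le_div ha).mpr h
    have hU := log_ub hy
    have e : (b / a - 1 / (b / a)) / 2 = (b / a - a / b) / 2 := by
      rw [one_div_div]
    rw [e] at hU
    have hlog : Real.log (a / b) = -Real.log (b / a) := by
      rw [Real.log_div ha.ne' hb.ne', Real.log_div hb.ne' ha.ne']
      ring
    rw [hlog]
    have h4 : a * Real.log (b / a) ≤ a * ((b / a - a / b) / 2) :=
      mul_le_mul_of_nonneg_left hU ha.le
    have h5 : a * ((b / a - a / b) / 2) = (b - a ^ 2 / b) / 2 := by
      field_simp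
    have h6 : -((b - a ^ 2 / b) / 2) - a + b = (a - b) ^ 2 / (2 * b) := by
      field_simp
      ring
    have h7 : (a - b) ^ 2 / 2 ≤ (a - b) ^ 2 / (2 * b) :=
      div_le_div_of_nonneg_left (sq_nonneg _) (by linarith) (by linarith)
    linarith

private lemma pt_upper {a b : ℝ} (ha : 0 < a) (hb : 0 < b) :
    a * Real.log (a / b) ≤ (a - b) + (a - b) ^ 2 / b := by
  have h := Real.log_le_sub_one_of_pos (div_pos ha hb)
  have h2 : a * Real.log (a / b) ≤ a * (a / b - 1) :=
    mul_le_mul_of_nonneg_left h ha.le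
  have e : a * (a / b - 1) = (a - b) + (a - b) ^ 2 / b := by
    field_simp
    ring
  linarith

private lemma kl_ge {X : Type*} [Fintype X] {q p : X → ℝ}
    (hq : IsProb q) (hp : IsProb p) (hq0 : ∀ x, 0 < q x) (hp0 : ∀ x, 0 < p x) :
    (∑ x, (q x - p x) ^ 2) / 2 ≤ klDiv q p := by
  have hq1 : ∀ x, q x ≤ 1 := by
    intro x
    rw [← hq.2]
    exact Finset.single_le_sum (fun y _ => hq.1 y) (Finset.mem_univ x)
  have hp1 : ∀ x, p x ≤ 1 := by
    intro x
    rw [← hp.2]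
    exact Finset.single_le_sum (fun y _ => hp.1 y) (Finset.mem_univ x)
  have e : klDiv q p = ∑ x, (q x * Real.log (q x / p x) - q x + p x) := by
    rw [klDiv, Finset.sum_add_distrib, Finset.sum_sub_distrib, hq.2, hp.2]
    ring
  rw [e, Finset.sum_div]
  apply Finset.sum_le_sum
  intro x _
  exact pt_lower (hq0 x) (hq1 x) (hp0 x) (hp1 x)

private lemma kl_le {X : Type*} [Fintype X] {q p : X → ℝ} {m : ℝ} (hm : 0 < m)
    (hq : IsProb q) (hp : IsProb p) (hq0 : ∀ x, 0 < q x) (hpm : ∀ x, m ≤ p x) :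
    klDiv q p ≤ (∑ x, (q x - p x) ^ 2) / m := by
  have step : klDiv q p ≤ ∑ x, ((q x - p x) + (q x - p x) ^ 2 / m) := by
    rw [klDiv]
    apply Finset.sum_le_sum
    intro x _
    have hpx : 0 < p x := lt_of_lt_of_le hm (hpm x)
    refine (pt_upper (hq0 x) hpx).trans ?_
    have h2 : (q x - p x) ^ 2 / p x ≤ (q x - p x) ^ 2 / m :=
      div_le_div_of_nonneg_left (sq_nonneg _) hm (hpm x)
    linarith
  rw [Finset.sum_add_distrib, Finset.sum_sub_distrib, hq.2, hp.2] at step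
  rw [Finset.sum_div]
  linarith

private lemma sqrt_tri {X : Type*} [Fintype X] (f g h : X → ℝ) :
    Real.sqrt (∑ x, (f x - h x) ^ 2) ≤
      Real.sqrt (∑ x, (f x - g x) ^ 2) + Real.sqrt (∑ x, (g x - h x) ^ 2) := by
  let F : EuclideanSpace ℝ X := WithLp.toLp 2 f
  let G : EuclideanSpace ℝ X := WithLp.toLp 2 g
  let H : EuclideanSpace ℝ X := WithLp.toLp 2 h
  have tri := dist_triangle F G H
  rw [EuclideanSpace.dist_eq, EuclideanSpace.dist_eq, EuclideanSpace.dist_eq] at tri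
  simpa [F, G, H, Real.dist_eq, sq_abs] using tri

/-- for a parameterized family `w ↦ p_w` in the restricted
simplex `Δ̊_m(X)`, there is `C > 0` such that whenever `D(q‖p*) ≤ ε`,
`{w : D(q‖p_w) ≤ ε} ⊆ {w : D(p_w‖p*) ≤ Cε} ⊆ {w : D(q‖p_w) ≤ (C/2)(C+1)ε}`. -/
theorem stmt10 {X : Type*} [Fintype X] (hX : 2 ≤ Fintype.card X)
    (m : ℝ) (hm : 0 < m) (hm' : m ≤ 1 / (Fintype.card X : ℝ))
    {W : Type*} (pW : W → X → ℝ)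
    (hpW : ∀ w, IsProb (pW w) ∧ ∀ x, m ≤ pW w x) :
    ∃ C : ℝ, 0 < C ∧
      ∀ ε : ℝ, 0 < ε →
        ∀ q pstar : X → ℝ,
          IsProb q → (∀ x, m ≤ q x) →
          IsProb pstar → (∀ x, m ≤ pstar x) →
          klDiv q pstar ≤ ε →
          {w : W | klDiv q (pW w) ≤ ε} ⊆ {w : W | klDiv (pW w) pstar ≤ C * ε} ∧
          {w : W | klDiv (pW w) pstar ≤ C * ε} ⊆
            {w : W | klDiv q (pW w) ≤ (C / 2) * (C + 1) * ε} := by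
  refine ⟨8 / m, by positivity, ?_⟩
  intro ε hε q pstar hq hqm hps hpsm hqs
  set C : ℝ := 8 / m with hC
  have hC0 : 0 < C := by positivity
  have hq0 : ∀ x, 0 < q x := fun x => lt_of_lt_of_le hm (hqm x)
  have hps0 : ∀ x, 0 < pstar x := fun x => lt_of_lt_of_le hm (hpsm x)
  have hpw0 : ∀ w x, 0 < pW w x := fun w x => lt_of_lt_of_le hm ((hpW w).2 x)
  have hSqs : ∑ x, (q x - pstar x) ^ 2 ≤ 2 * ε := by
    have := kl_ge hq hps hq0 hps0
    linarith
  have sqnn : ∀ f g : X → ℝ, (0:ℝ) ≤ ∑ x, (f x - g x) ^ 2 := fun f g =>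
    Finset.sum_nonneg fun x _ => sq_nonneg _
  have s2e : Real.sqrt (2 * ε) ^ 2 = 2 * ε := Real.sq_sqrt (by linarith)
  have s2e0 : 0 ≤ Real.sqrt (2 * ε) := Real.sqrt_nonneg _
  have symmS : ∀ f g : X → ℝ, ∑ x, (f x - g x) ^ 2 = ∑ x, (g x - f x) ^ 2 := by
    intro f g
    apply Finset.sum_congr rfl
    intro x _
    ring
  constructor
  · intro w hw
    simp only [Set.mem_setOf_eq] at hw ⊢
    have hSqw : ∑ x, (q x - pW w x) ^ 2 ≤ 2 * ε := by
      have := kl_ge hq (hpW w).1 hq0 (hpw0 w)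
      linarith
    have tri := sqrt_tri (pW w) q pstar
    have h1 : Real.sqrt (∑ x, (pW w x - q x) ^ 2) ≤ Real.sqrt (2 * ε) := by
      rw [symmS]
      exact Real.sqrt_le_sqrt hSqw
    have h2 : Real.sqrt (∑ x, (q x - pstar x) ^ 2) ≤ Real.sqrt (2 * ε) :=
      Real.sqrt_le_sqrt hSqs
    have h3 : Real.sqrt (∑ x, (pW w x - pstar x) ^ 2) ≤ 2 * Real.sqrt (2 * ε) := by
      linarith
    have h4 : ∑ x, (pW w x - pstar x) ^ 2 ≤ 8 * ε := by
      have hsq := pow_le_pow_left₀ (Real.sqrt_nonneg _) h3 2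
      rw [Real.sq_sqrt (sqnn (pW w) pstar)] at hsq
      have e4 : (2 * Real.sqrt (2 * ε)) ^ 2 = 4 * (2 * ε) := by
        rw [mul_pow, s2e]
        norm_num
      linarith [e4 ▸ hsq]
    have h5 := kl_le hm (hpW w).1 hps (hpw0 w) hpsm
    calc klDiv (pW w) pstar ≤ (∑ x, (pW w x - pstar x) ^ 2) / m := h5
      _ ≤ 8 * ε / m := by gcongr
      _ = C * ε := by rw [hC]; ring
  · intro w hw
    simp only [Set.mem_setOf_eq] at hw ⊢
    have hSws : ∑ x, (pW w x - pstar x) ^ 2 ≤ 2 * (C * ε) := by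
      have := kl_ge (hpW w).1 hps (hpw0 w) hps0
      linarith
    have tri := sqrt_tri q pstar (pW w)
    set sC := Real.sqrt C with hsC
    have hsC0 : 0 ≤ sC := Real.sqrt_nonneg _
    have hsC2 : sC ^ 2 = C := Real.sq_sqrt hC0.le
    have hmulsqrt : Real.sqrt (2 * (C * ε)) = Real.sqrt (2 * ε) * sC := by
      rw [hsC, ← Real.sqrt_mul (by linarith : (0:ℝ) ≤ 2 * ε)]
      ring_nf
    have h1 : Real.sqrt (∑ x, (q x - pstar x) ^ 2) ≤ Real.sqrt (2 * ε) :=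
      Real.sqrt_le_sqrt hSqs
    have h2 : Real.sqrt (∑ x, (pstar x - pW w x) ^ 2) ≤ Real.sqrt (2 * ε) * sC := by
      rw [symmS, ← hmulsqrt]
      exact Real.sqrt_le_sqrt hSws
    have h3 : Real.sqrt (∑ x, (q x - pW w x) ^ 2) ≤ Real.sqrt (2 * ε) * (1 + sC) := by
      have e3 : Real.sqrt (2 * ε) * (1 + sC)
          = Real.sqrt (2 * ε) + Real.sqrt (2 * ε) * sC := by ring
      linarith [e3]
    have h4 : ∑ x, (q x - pW w x) ^ 2 ≤ 2 * ε * (1 + sC) ^ 2 := by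
      have hsq := pow_le_pow_left₀ (Real.sqrt_nonneg _) h3 2
      rw [Real.sq_sqrt (sqnn q (pW w))] at hsq
      have e4 : (Real.sqrt (2 * ε) * (1 + sC)) ^ 2 = 2 * ε * (1 + sC) ^ 2 := by
        rw [mul_pow, s2e]
      linarith [e4 ▸ hsq]
    have h5 := kl_le hm hq (hpW w).1 hq0 ((hpW w).2)
    have h6 : (∑ x, (q x - pW w x) ^ 2) / m ≤ 2 * ε * (1 + sC) ^ 2 / m := by
      gcongr
      all_goals exact mul_nonneg (by linarith) (sq_nonneg _)
    have hamgm : 2 * sC ≤ 1 + C := by nlinarith [sq_nonneg (sC - 1)]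
    have key : C * ε * (2 * sC) ≤ C * ε * (1 + C) :=
      mul_le_mul_of_nonneg_left hamgm (by positivity)
    have hminv : (1:ℝ) / m = C / 8 := by rw [hC]; ring
    have e7 : 2 * ε * (1 + sC) ^ 2 / m
        = C * ε / 4 + (C * ε * (2 * sC)) / 4 + C * ε * sC ^ 2 / 4 := by
      rw [div_eq_mul_one_div, hminv]
      ring
    have e8 : C * ε * sC ^ 2 = C * ε * C := by rw [hsC2]
    have h7 : 2 * ε * (1 + sC) ^ 2 / m ≤ (C / 2) * (C + 1) * ε := by
      rw [e7, e8]
      nlinarith [key]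
    linarith
end

section
/- Let X be a finite set with at least two elements, let 0 < m ≤ 1/|X|, let W be a measurable subset of ℝ^d, and let w ↦ p_w be a map from W into the restricted simplex Δ̊_m(X) such that the relevant sublevel sets are Lebesgue measurable. Then there exists a constant C > 0 (depending only on m) such that for every ε > 0 and every pair q, p* ∈ Δ̊_m(X) with D(q‖p*) ≤ ε, the Lebesgue measures satisfy Vol({w ∈ W : D(q‖p_w) ≤ ε}) ≤ Vol({w ∈ W : D(p_w‖p*) ≤ C·ε}) ≤ Vol({w ∈ W : D(q‖p_w) ≤ (C/2)·(C + 1)·ε}). -/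
open Finset MeasureTheory

lemma ptwise_upper {p q : ℝ} (hp : 0 < p) (hq : 0 ≤ q) :
    q * Real.log (q / p) ≤ (q - p) + (q - p)^2 / p := by
  rcases eq_or_lt_of_le hq with h | h
  · rw [← h, zero_mul]
    have : (0:ℝ) - p + (0 - p)^2 / p = 0 := by field_simp; ring
    rw [this]
  · have hlog : Real.log (q / p) ≤ q / p - 1 :=
      Real.log_le_sub_one_of_pos (by positivity)
    have h2 : q * Real.log (q / p) ≤ q * (q / p - 1) :=
      mul_le_mul_of_nonneg_left hlog h.le
    refine h2.trans_eq ?_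
    field_simp
    ring

lemma ptwise_lower {p : ℝ} (hp : 0 < p) (hp1 : p ≤ 1) {q : ℝ} (hq : 0 < q) (hq1 : q ≤ 1) :
    (q - p) + (q - p)^2 / 2 ≤ q * Real.log (q / p) := by
  have hlogdiv : Real.log (q / p) = Real.log q - Real.log p := Real.log_div hq.ne' hp.ne'
  set g : ℝ → ℝ := fun s => s * Real.log s - s * Real.log p - s + p - (s - p)^2/2 with hg
  have hderiv : ∀ s : ℝ, 0 < s → HasDerivAt g (Real.log s - Real.log p - (s - p)) s := by
    intro s hs
    have h1 : HasDerivAt (fun x : ℝ => x * Real.log x) (Real.log s + 1) s :=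
      Real.hasDerivAt_mul_log (ne_of_gt hs)
    have h2 : HasDerivAt (fun x : ℝ => x * Real.log p) (Real.log p) s := by
      simpa using (hasDerivAt_id s).mul_const (Real.log p)
    have h3 : HasDerivAt (fun x : ℝ => (x - p)^2/2) (s - p) s := by
      have : HasDerivAt (fun x : ℝ => (x - p)^2) (2*(s-p)) s := by
        exact (((hasDerivAt_id s).sub_const p).pow 2).congr_deriv (by simp)
      simpa [mul_comm, mul_div_assoc] using this.div_const 2
    have := (((h1.sub h2).sub (hasDerivAt_id s)).add_const p).sub h3
    refine this.congr_deriv ?_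
    ring
  have hgp : g p = 0 := by simp [hg]
  have key : 0 ≤ g q := by
    rcases le_total q p with hle | hle
    · have hanti : AntitoneOn g (Set.Icc q p) := by
        apply antitoneOn_of_deriv_nonpos (convex_Icc q p)
        · exact fun s hs => ((hderiv s (lt_of_lt_of_le hq hs.1)).continuousAt).continuousWithinAt
        · intro s hs
          rw [interior_Icc] at hs
          exact ((hderiv s (lt_trans hq hs.1)).differentiableAt).differentiableWithinAt
        · intro s hs
          rw [interior_Icc] at hs
          have hs0 : 0 < s := lt_trans hq hs.1
          rw [(hderiv s hs0).deriv]
          have hlog : Real.log s - Real.log p ≤ s/p - 1 := by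
            have := Real.log_le_sub_one_of_pos (show 0 < s/p by positivity)
            rwa [Real.log_div hs0.ne' hp.ne'] at this
          have hsp : s < p := hs.2
          have hmul : p * (Real.log s - Real.log p) ≤ s - p := by
            calc p * (Real.log s - Real.log p) ≤ p * (s/p - 1) :=
                  mul_le_mul_of_nonneg_left hlog hp.le
              _ = s - p := by field_simp
          nlinarith [hmul]
      have := hanti (Set.left_mem_Icc.mpr hle) (Set.right_mem_Icc.mpr hle) hle
      rw [hgp] at this; exact this
    · have hmono : MonotoneOn g (Set.Icc p q) := by
        apply monotoneOn_of_deriv_nonneg (convex_Icc p q)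
        · exact fun s hs => ((hderiv s (lt_of_lt_of_le hp hs.1)).continuousAt).continuousWithinAt
        · intro s hs
          rw [interior_Icc] at hs
          exact ((hderiv s (lt_trans hp hs.1)).differentiableAt).differentiableWithinAt
        · intro s hs
          rw [interior_Icc] at hs
          have hs0 : 0 < s := lt_trans hp hs.1
          rw [(hderiv s hs0).deriv]
          have hlog : Real.log p - Real.log s ≤ p/s - 1 := by
            have := Real.log_le_sub_one_of_pos (show 0 < p/s by positivity)
            rwa [Real.log_div hp.ne' hs0.ne'] at this
          have hsp : p < s := hs.1
          have hs1 : s < 1 := lt_of_lt_of_le hs.2 hq1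
          have hmul : s * (Real.log p - Real.log s) ≤ p - s := by
            calc s * (Real.log p - Real.log s) ≤ s * (p/s - 1) :=
                  mul_le_mul_of_nonneg_left hlog hs0.le
              _ = p - s := by field_simp
          nlinarith [hmul, mul_pos hs0 hs0]
      have := hmono (Set.left_mem_Icc.mpr hle) (Set.right_mem_Icc.mpr hle) hle
      rw [hgp] at this; exact this
  have h0 : 0 ≤ q * Real.log q - q * Real.log p - q + p - (q - p)^2/2 := key
  rw [hlogdiv]
  nlinarith [h0]

lemma triangle_sq {X : Type*} [Fintype X] (a b c : X → ℝ) :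
    ∑ x, (a x - c x)^2 ≤
      (Real.sqrt (∑ x, (a x - b x)^2) + Real.sqrt (∑ x, (b x - c x)^2))^2 := by
  let A : EuclideanSpace ℝ X := WithLp.toLp 2 a
  let B : EuclideanSpace ℝ X := WithLp.toLp 2 b
  let C : EuclideanSpace ℝ X := WithLp.toLp 2 c
  have ht := dist_triangle A B C
  rw [EuclideanSpace.dist_eq, EuclideanSpace.dist_eq, EuclideanSpace.dist_eq] at ht
  have h1 : Real.sqrt (∑ x, (a x - c x)^2) ≤
      Real.sqrt (∑ x, (a x - b x)^2) + Real.sqrt (∑ x, (b x - c x)^2) := by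
    simpa [Real.dist_eq, sq_abs] using ht
  have h2 : (0:ℝ) ≤ ∑ x, (a x - c x)^2 := by positivity
  calc ∑ x, (a x - c x)^2 = (Real.sqrt (∑ x, (a x - c x)^2))^2 := (Real.sq_sqrt h2).symm
    _ ≤ _ := by
        apply pow_le_pow_left₀ (Real.sqrt_nonneg _) h1

lemma prob_le_one {X : Type*} [Fintype X] {p : X → ℝ} (hp : IsProb p) (x : X) : p x ≤ 1 := by
  rw [← hp.2]
  exact Finset.single_le_sum (fun y _ => hp.1 y) (Finset.mem_univ x)

lemma kl_lower {X : Type*} [Fintype X] {m : ℝ} (hm : 0 < m) {q p : X → ℝ}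
    (hq : IsProb q) (hqm : ∀ x, m ≤ q x) (hp : IsProb p) (hpm : ∀ x, m ≤ p x) :
    (∑ x, (q x - p x)^2) / 2 ≤ klDiv q p := by
  have h : ∀ x, (q x - p x) + (q x - p x)^2 / 2 ≤ q x * Real.log (q x / p x) := fun x =>
    ptwise_lower (lt_of_lt_of_le hm (hpm x)) (prob_le_one hp x)
      (lt_of_lt_of_le hm (hqm x)) (prob_le_one hq x)
  have hs := Finset.sum_le_sum (s := Finset.univ) (fun x _ => h x)
  unfold klDiv
  have e : ∑ x, ((q x - p x) + (q x - p x)^2 / 2)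
      = (∑ x, q x - ∑ x, p x) + (∑ x, (q x - p x)^2)/2 := by
    rw [Finset.sum_add_distrib, Finset.sum_sub_distrib, ← Finset.sum_div]
  rw [e, hq.2, hp.2] at hs
  linarith

lemma kl_upper {X : Type*} [Fintype X] {m : ℝ} (hm : 0 < m) {q p : X → ℝ}
    (hq : IsProb q) (hp : IsProb p) (hpm : ∀ x, m ≤ p x) :
    klDiv q p ≤ (∑ x, (q x - p x)^2) / m := by
  have h : ∀ x, q x * Real.log (q x / p x) ≤ (q x - p x) + (q x - p x)^2 / m := by
    intro x
    refine (ptwise_upper (lt_of_lt_of_le hm (hpm x)) (hq.1 x)).trans ?_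
    have : (q x - p x)^2 / p x ≤ (q x - p x)^2 / m :=
      div_le_div_of_nonneg_left (by positivity) hm (hpm x)
    linarith
  have hs := Finset.sum_le_sum (s := Finset.univ) (fun x _ => h x)
  unfold klDiv
  have e : ∑ x, ((q x - p x) + (q x - p x)^2 / m)
      = (∑ x, q x - ∑ x, p x) + (∑ x, (q x - p x)^2)/m := by
    rw [Finset.sum_add_distrib, Finset.sum_sub_distrib, ← Finset.sum_div]
  rw [e, hq.2, hp.2] at hs
  linarith

/-- for a parameterized family `w ↦ p_w` defined on a measurable
`W ⊆ ℝ^d` with values in the restricted simplex `Δ̊_m(X)` and measurable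
sublevel sets, there is `C > 0` such that whenever `D(q‖p*) ≤ ε`, the Lebesgue
volumes of the sublevel sets satisfy
`Vol{w ∈ W : D(q‖p_w) ≤ ε} ≤ Vol{w ∈ W : D(p_w‖p*) ≤ Cε}
  ≤ Vol{w ∈ W : D(q‖p_w) ≤ (C/2)(C+1)ε}`. -/
theorem stmt11 {X : Type*} [Fintype X] (hX : 2 ≤ Fintype.card X)
    (m : ℝ) (hm : 0 < m) (hm' : m ≤ 1 / (Fintype.card X : ℝ))
    (d : ℕ) (W : Set (Fin d → ℝ)) (hW : MeasurableSet W)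
    (pW : (Fin d → ℝ) → X → ℝ)
    (hpW : ∀ w ∈ W, IsProb (pW w) ∧ ∀ x, m ≤ pW w x)
    (hmeas : ∀ (q' p' : X → ℝ) (ε : ℝ),
      MeasurableSet {w ∈ W | klDiv q' (pW w) ≤ ε} ∧
      MeasurableSet {w ∈ W | klDiv (pW w) p' ≤ ε}) :
    ∃ C : ℝ, 0 < C ∧
      ∀ ε : ℝ, 0 < ε →
        ∀ q pstar : X → ℝ,
          IsProb q → (∀ x, m ≤ q x) →
          IsProb pstar → (∀ x, m ≤ pstar x) →
          klDiv q pstar ≤ ε →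
          volume {w ∈ W | klDiv q (pW w) ≤ ε} ≤
              volume {w ∈ W | klDiv (pW w) pstar ≤ C * ε} ∧
          volume {w ∈ W | klDiv (pW w) pstar ≤ C * ε} ≤
              volume {w ∈ W | klDiv q (pW w) ≤ (C / 2) * (C + 1) * ε} := by
  refine ⟨8 / m, by positivity, ?_⟩
  intro ε hε q pstar hq hqm hps hpsm hqps
  set C : ℝ := 8 / m with hC
  -- distance from q to pstar
  have hSqs : ∑ x, (q x - pstar x)^2 ≤ 2 * ε := by
    have := kl_lower hm hq hqm hps hpsm
    linarith [this.trans hqps]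
  constructor
  · apply MeasureTheory.measure_mono
    rintro w ⟨hwW, hw⟩
    refine ⟨hwW, ?_⟩
    obtain ⟨hwP, hwm⟩ := hpW w hwW
    have hS1 : ∑ x, (q x - pW w x)^2 ≤ 2 * ε := by
      have := kl_lower hm hq hqm hwP hwm
      linarith [this.trans hw]
    -- triangle: pW w → q → pstar
    have htri := triangle_sq (pW w) q pstar
    have h1 : Real.sqrt (∑ x, (pW w x - q x)^2) ≤ Real.sqrt (2*ε) := by
      apply Real.sqrt_le_sqrt
      calc ∑ x, (pW w x - q x)^2 = ∑ x, (q x - pW w x)^2 := by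
            apply Finset.sum_congr rfl; intro x _; ring
        _ ≤ 2*ε := hS1
    have h2 : Real.sqrt (∑ x, (q x - pstar x)^2) ≤ Real.sqrt (2*ε) :=
      Real.sqrt_le_sqrt hSqs
    have hS3 : ∑ x, (pW w x - pstar x)^2 ≤ 8 * ε := by
      calc ∑ x, (pW w x - pstar x)^2
          ≤ (Real.sqrt (∑ x, (pW w x - q x)^2) + Real.sqrt (∑ x, (q x - pstar x)^2))^2 := htri
        _ ≤ (Real.sqrt (2*ε) + Real.sqrt (2*ε))^2 := by
            apply pow_le_pow_left₀ (by positivity) (add_le_add h1 h2)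
        _ = 4 * (Real.sqrt (2*ε))^2 := by ring
        _ = 8 * ε := by rw [Real.sq_sqrt (by positivity)]; ring
    calc klDiv (pW w) pstar ≤ (∑ x, (pW w x - pstar x)^2) / m := kl_upper hm hwP hps hpsm
      _ ≤ 8 * ε / m := by exact div_le_div_of_nonneg_right hS3 hm.le
      _ = C * ε := by rw [hC]; ring
  · apply MeasureTheory.measure_mono
    rintro w ⟨hwW, hw⟩
    refine ⟨hwW, ?_⟩
    obtain ⟨hwP, hwm⟩ := hpW w hwW
    have hS1 : ∑ x, (pW w x - pstar x)^2 ≤ 2 * (C * ε) := by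
      have := kl_lower hm hwP hwm hps hpsm
      linarith [this.trans hw]
    have htri := triangle_sq q pstar (pW w)
    have h1 : Real.sqrt (∑ x, (q x - pstar x)^2) ≤ Real.sqrt (2*ε) :=
      Real.sqrt_le_sqrt hSqs
    have h2 : Real.sqrt (∑ x, (pstar x - pW w x)^2) ≤ Real.sqrt (2*(C*ε)) := by
      apply Real.sqrt_le_sqrt
      calc ∑ x, (pstar x - pW w x)^2 = ∑ x, (pW w x - pstar x)^2 := by
            apply Finset.sum_congr rfl; intro x _; ring
        _ ≤ 2*(C*ε) := hS1
    have hCpos : 0 < C := by rw [hC]; positivity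
    have hS3 : ∑ x, (q x - pW w x)^2 ≤ 4 * (C + 1) * ε := by
      calc ∑ x, (q x - pW w x)^2
          ≤ (Real.sqrt (∑ x, (q x - pstar x)^2) + Real.sqrt (∑ x, (pstar x - pW w x)^2))^2 := htri
        _ ≤ (Real.sqrt (2*ε) + Real.sqrt (2*(C*ε)))^2 := by
            apply pow_le_pow_left₀ (by positivity) (add_le_add h1 h2)
        _ ≤ 2 * ((Real.sqrt (2*ε))^2 + (Real.sqrt (2*(C*ε)))^2) := by
            nlinarith [sq_nonneg (Real.sqrt (2*ε) - Real.sqrt (2*(C*ε)))]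
        _ = 2 * (2*ε + 2*(C*ε)) := by
            rw [Real.sq_sqrt (by positivity), Real.sq_sqrt (by positivity)]
        _ = 4 * (C + 1) * ε := by ring
    calc klDiv q (pW w) ≤ (∑ x, (q x - pW w x)^2) / m := kl_upper hm hq hwP hwm
      _ ≤ 4 * (C + 1) * ε / m := by exact div_le_div_of_nonneg_right hS3 hm.le
      _ = (C / 2) * (C + 1) * ε := by
          rw [hC]; field_simp; ring
end
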